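/- arXiv:0803.2369 — 4 statements merged into one kernel-verified Lean document; each statement's English description precedes it below -/
import Mathlib

section
/- Let A be a commutative ring, I an ideal of A not containing 1, and J an ideal of A. Define ν_I(J) = sup{n ∈ ℕ : J ⊆ I^n} (with value ∞ if J ⊆ I^n for all n). Then the sequence u_k = ν_I(J^k)/k converges in ℝ≥0 ∪ {∞} as k → ∞. -/
open Filter ENNReal NNReal

/-- The `I`-adic order `ν_I(J)` of an ideal `J`: the supremum of the `n` with `J ⊆ Iⁿ`,
as an extended nonnegative real (`∞` if `J ⊆ Iⁿ` for all `n`). -/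
noncomputable def idealOrd {A : Type*} [CommRing A] (I J : Ideal A) : ℝ≥0∞ :=
  ⨆ n ∈ {n : ℕ | J ≤ I ^ n}, (n : ℝ≥0∞)

/-- `ν̄_I(J) = lim_{k→∞} ν_I(Jᵏ)/k`.  (The limit exists, so it equals the `limsup`,
which we use as the definition.) -/
noncomputable def idealNubar {A : Type*} [CommRing A] (I J : Ideal A) : ℝ≥0∞ :=
  Filter.atTop.limsup fun k : ℕ => idealOrd I (J ^ k) / (k : ℝ≥0∞)

section Aux

variable {A : Type*} [CommRing A]

lemma le_idealOrd {I J : Ideal A} {n : ℕ} (h : J ≤ I ^ n) : (n : ℝ≥0∞) ≤ idealOrd I J :=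
  le_iSup₂ (f := fun (n : ℕ) (_ : J ≤ I ^ n) => (n : ℝ≥0∞)) n h

lemma idealOrd_anti {I J J' : Ideal A} (h : J ≤ J') : idealOrd I J' ≤ idealOrd I J :=
  iSup₂_le fun _ hn => le_idealOrd (le_trans h hn)

lemma idealOrd_superadd (I J₁ J₂ : Ideal A) :
    idealOrd I J₁ + idealOrd I J₂ ≤ idealOrd I (J₁ * J₂) := by
  rw [idealOrd, idealOrd]
  refine ENNReal.biSup_add_biSup_le (f := fun n : ℕ => (n : ℝ≥0∞))
    (g := fun n : ℕ => (n : ℝ≥0∞)) ⟨0, by simp⟩ ⟨0, by simp⟩ fun p hp q hq => ?_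
  have : J₁ * J₂ ≤ I ^ (p + q) := by
    rw [pow_add]; exact Ideal.mul_mono hp hq
  simpa using le_idealOrd this

lemma idealOrd_pow_superadd (I J : Ideal A) (m n : ℕ) :
    idealOrd I (J ^ m) + idealOrd I (J ^ n) ≤ idealOrd I (J ^ (m + n)) := by
  rw [pow_add]; exact idealOrd_superadd I _ _

lemma idealOrd_pow_mul (I J : Ideal A) (q k : ℕ) :
    (q : ℝ≥0∞) * idealOrd I (J ^ k) ≤ idealOrd I (J ^ (q * k)) := by
  induction q with
  | zero => simp
  | succ q ih =>
    have h := idealOrd_pow_superadd I J (q * k) k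
    calc ((q + 1 : ℕ) : ℝ≥0∞) * idealOrd I (J ^ k)
        = (q : ℝ≥0∞) * idealOrd I (J ^ k) + idealOrd I (J ^ k) := by
          push_cast; ring
      _ ≤ idealOrd I (J ^ (q * k)) + idealOrd I (J ^ k) := by gcongr
      _ ≤ idealOrd I (J ^ (q * k + k)) := h
      _ = idealOrd I (J ^ ((q + 1) * k)) := by ring_nf

lemma real_floor_div_tendsto (k : ℕ) (hk : k ≠ 0) (c : ℝ) (hc : 0 ≤ c) :
    Tendsto (fun n : ℕ => ((n / k : ℕ) : ℝ) * c / n) atTop (nhds (c / k)) := by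
  have hk' : (0:ℝ) < k := by positivity
  have hup : ∀ᶠ n : ℕ in atTop, ((n / k : ℕ) : ℝ) * c / n ≤ c / k := by
    filter_upwards [eventually_ge_atTop 1] with n hn
    have hn' : (0:ℝ) < n := by exact_mod_cast hn
    have h1 : ((n / k : ℕ) : ℝ) ≤ (n : ℝ) / k := Nat.cast_div_le
    calc ((n / k : ℕ) : ℝ) * c / n ≤ ((n:ℝ)/k) * c / n := by gcongr
      _ = c / k := by field_simp
  have hlo : ∀ᶠ n : ℕ in atTop, c / k - c / n ≤ ((n / k : ℕ) : ℝ) * c / n := by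
    filter_upwards [eventually_ge_atTop 1] with n hn
    have hn' : (0:ℝ) < n := by exact_mod_cast hn
    have h2 : (n:ℝ)/k - 1 ≤ ((n / k : ℕ) : ℝ) := by
      have hmod : n % k < k := Nat.mod_lt _ (Nat.pos_of_ne_zero hk)
      have hdm := Nat.div_add_mod n k
      have hnat : n < (n / k + 1) * k := by
        calc n = k * (n / k) + n % k := (Nat.div_add_mod n k).symm
          _ < k * (n / k) + k := by omega
          _ = (n / k + 1) * k := by ring
      have : (n:ℝ) < ((n / k : ℕ) + 1) * k := by exact_mod_cast hnat
      rw [div_sub_one hk'.ne', div_le_iff₀ hk']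
      nlinarith
    calc c / k - c / n = ((n:ℝ)/k - 1) * c / n := by field_simp
      _ ≤ ((n / k : ℕ) : ℝ) * c / n := by gcongr
  have hl : Tendsto (fun n : ℕ => c / k - c / n) atTop (nhds (c / k)) := by
    have : Tendsto (fun n : ℕ => c / (n:ℝ)) atTop (nhds 0) :=
      tendsto_const_nhds.div_atTop tendsto_natCast_atTop_atTop
    simpa using tendsto_const_nhds.sub this
  exact tendsto_of_tendsto_of_tendsto_of_le_of_le' hl tendsto_const_nhds hlo hup

lemma ennreal_floor_tendsto (k : ℕ) (hk : k ≠ 0) (c : ℝ≥0) :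
    Tendsto (fun n : ℕ => ((n / k : ℕ) : ℝ≥0∞) * (c : ℝ≥0∞) / (n : ℝ≥0∞)) atTop
      (nhds ((c : ℝ≥0∞) / (k : ℝ≥0∞))) := by
  have hreal : Tendsto (fun n : ℕ => ((n / k : ℕ) : ℝ) * (c : ℝ) / n) atTop
      (nhds ((c : ℝ) / k)) := real_floor_div_tendsto k hk c c.coe_nonneg
  have hnn : Tendsto (fun n : ℕ => ((n / k : ℕ) : ℝ≥0) * c / (n : ℝ≥0)) atTop
      (nhds (c / (k : ℝ≥0))) := by
    rw [← NNReal.tendsto_coe]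
    have h : ((c / (k : ℝ≥0) : ℝ≥0) : ℝ) = (c : ℝ) / k := by push_cast; ring
    rw [h]
    refine hreal.congr fun n => ?_
    push_cast; ring
  have htc := (ENNReal.tendsto_coe (f := atTop)).2 hnn
  have heq : ((c / (k : ℝ≥0) : ℝ≥0) : ℝ≥0∞) = (c : ℝ≥0∞) / (k : ℝ≥0∞) := by
    rw [ENNReal.coe_div (by exact_mod_cast hk)]; norm_cast
  rw [heq] at htc
  refine htc.congr' ?_
  filter_upwards [eventually_ge_atTop 1] with n hn
  have hn0 : ((n : ℝ≥0)) ≠ 0 := by exact_mod_cast (by omega : n ≠ 0)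
  rw [ENNReal.coe_div hn0]
  norm_cast

lemma idealOrd_div_le_liminf (I J : Ideal A) (k : ℕ) (hk : k ≠ 0) :
    idealOrd I (J ^ k) / (k : ℝ≥0∞) ≤
      atTop.liminf fun n : ℕ => idealOrd I (J ^ n) / (n : ℝ≥0∞) := by
  set a : ℕ → ℝ≥0∞ := fun n => idealOrd I (J ^ n) with ha
  by_cases htop : a k = ⊤
  · refine le_top.trans (Filter.le_liminf_of_le (by isBoundedDefault) ?_)
    filter_upwards [eventually_ge_atTop (max k 1)] with n hn
    have h1 : a k + a (n - k) ≤ a n := by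
      have := idealOrd_pow_superadd I J k (n - k)
      rwa [show k + (n - k) = n by omega] at this
    have h2 : a n = ⊤ := by
      rw [htop] at h1; simpa using h1
    have hn0 : ((n : ℝ≥0∞)) ≠ ⊤ := by simp
    show ⊤ ≤ a n / (n : ℝ≥0∞)
    rw [h2, ENNReal.top_div_of_ne_top hn0]
  · set c : ℝ≥0 := (a k).toNNReal with hc
    have hak : a k = (c : ℝ≥0∞) := (ENNReal.coe_toNNReal htop).symm
    have hbound : ∀ n : ℕ,
        ((n / k : ℕ) : ℝ≥0∞) * (c : ℝ≥0∞) / (n : ℝ≥0∞) ≤ a n / (n : ℝ≥0∞) := by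
      intro n
      have h1 : ((n / k : ℕ) : ℝ≥0∞) * a k ≤ a ((n / k) * k) := idealOrd_pow_mul I J _ k
      have h2 : a ((n / k) * k) ≤ a n :=
        idealOrd_anti (Ideal.pow_le_pow_right (Nat.div_mul_le_self n k))
      rw [← hak]
      exact ENNReal.div_le_div_right (h1.trans h2) _
    have hlim := ennreal_floor_tendsto k hk c
    calc a k / (k : ℝ≥0∞) = (c : ℝ≥0∞) / (k : ℝ≥0∞) := by rw [hak]
      _ = atTop.liminf fun n : ℕ =>
            ((n / k : ℕ) : ℝ≥0∞) * (c : ℝ≥0∞) / (n : ℝ≥0∞) := hlim.liminf_eq.symm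
      _ ≤ atTop.liminf fun n : ℕ => a n / (n : ℝ≥0∞) :=
            Filter.liminf_le_liminf (Eventually.of_forall hbound)

end Aux

set_option linter.unusedVariables false in
/-- If `I` is a proper ideal of a commutative ring `A` and `J` is any
ideal, the sequence `u_k = ν_I(Jᵏ)/k` converges in `ℝ≥0 ∪ {∞}` as `k → ∞`. -/
theorem tendsto_idealOrd_pow_div {A : Type*} [CommRing A] (I J : Ideal A) (hI : I ≠ ⊤) :
    ∃ L : ℝ≥0∞, Tendsto (fun k : ℕ => idealOrd I (J ^ k) / (k : ℝ≥0∞)) atTop (nhds L) := by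
  set u : ℕ → ℝ≥0∞ := fun n => idealOrd I (J ^ n) / (n : ℝ≥0∞) with hu
  set L : ℝ≥0∞ := ⨆ m : ℕ, idealOrd I (J ^ (m + 1)) / ((m + 1 : ℕ) : ℝ≥0∞) with hL
  have hub : atTop.limsup u ≤ L := by
    refine Filter.limsup_le_of_le (by isBoundedDefault) ?_
    filter_upwards [eventually_ge_atTop 1] with n hn
    obtain ⟨m, rfl⟩ : ∃ m, n = m + 1 := ⟨n - 1, by omega⟩
    exact le_iSup (fun m : ℕ => idealOrd I (J ^ (m + 1)) / ((m + 1 : ℕ) : ℝ≥0∞)) m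
  have hlb : L ≤ atTop.liminf u :=
    iSup_le fun m => idealOrd_div_le_liminf I J (m + 1) (Nat.succ_ne_zero m)
  have hcmp : atTop.liminf u ≤ atTop.limsup u := Filter.liminf_le_limsup
  exact ⟨L, tendsto_of_liminf_eq_limsup
    (le_antisymm (hcmp.trans hub) hlb)
    (le_antisymm hub (hlb.trans hcmp))⟩
end

section
/- Let A be a commutative ring and I a proper ideal. Then ν̄_I is an order function: for all x, y ∈ A, ν̄_I(x+y) ≥ min(ν̄_I(x), ν̄_I(y)), ν̄_I(xy) ≥ ν̄_I(x) + ν̄_I(y), ν̄_I(0) = ∞ and ν̄_I(1) = 0. -/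
open Filter ENNReal

/-- `ν̄_I(x)` for an element `x`, i.e. `ν̄_I` of the principal ideal `(x)`. -/
noncomputable def elemNubar {A : Type*} [CommRing A] (I : Ideal A) (x : A) : ℝ≥0∞ :=
  idealNubar I (Ideal.span {x})

section NatAux

lemma nat_div_floor_aux {m : ℕ} (hm : 0 < m) (j i : ℕ) (hi : i ≤ j * m) :
    j - 1 ≤ i / m + (j * m - i) / m := by
  have h1 : m * (i / m) + i % m = i := Nat.div_add_mod i m
  have h2 : m * ((j * m - i) / m) + (j * m - i) % m = j * m - i := Nat.div_add_mod _ m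
  have r1 : i % m < m := Nat.mod_lt _ hm
  have r2 : (j * m - i) % m < m := Nat.mod_lt _ hm
  have e : i + (j * m - i) = j * m := Nat.add_sub_cancel' hi
  have expand : (i / m + (j * m - i) / m + 2) * m
      = m * (i / m) + m * ((j * m - i) / m) + (m + m) := by ring
  have hlt : j * m < (i / m + (j * m - i) / m + 2) * m := by linarith
  have hq : j < i / m + (j * m - i) / m + 2 := Nat.lt_of_mul_lt_mul_right hlt
  exact Nat.sub_le_iff_le_add.mpr (Nat.lt_succ_iff.mp hq)

end NatAux

section OrdAux

variable {A : Type*} [CommRing A] (I : Ideal A)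

lemma le_idealOrd_aux {J : Ideal A} {n : ℕ} (h : J ≤ I ^ n) : (n : ℝ≥0∞) ≤ idealOrd I J :=
  le_biSup _ h

lemma exists_of_lt_idealOrd_aux {J : Ideal A} {d : ℝ≥0∞} (h : d < idealOrd I J) :
    ∃ n : ℕ, J ≤ I ^ n ∧ d < (n : ℝ≥0∞) := by
  simp only [idealOrd, lt_iSup_iff, Set.mem_setOf_eq] at h
  obtain ⟨n, hn, hd⟩ := h
  exact ⟨n, hn, hd⟩

lemma idealOrd_mul_aux (J K : Ideal A) :
    idealOrd I J + idealOrd I K ≤ idealOrd I (J * K) := by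
  rw [idealOrd, idealOrd, ENNReal.biSup_add' ⟨0, by simp⟩]
  refine iSup₂_le fun m hm => ?_
  rw [ENNReal.add_biSup' ⟨0, by simp⟩]
  refine iSup₂_le fun n hn => ?_
  have : J * K ≤ I ^ (m + n) := by
    rw [pow_add]
    exact Ideal.mul_mono hm hn
  simpa using le_idealOrd_aux I this

lemma pow_mem_of_pow_mem_aux {x : A} {c m : ℕ} (hx : x ^ m ∈ I ^ c) (i : ℕ) :
    x ^ i ∈ I ^ (c * (i / m)) := by
  have hxeq : x ^ i = (x ^ m) ^ (i / m) * x ^ (i % m) := by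
    rw [← pow_mul, ← pow_add, Nat.div_add_mod]
  rw [hxeq]
  refine Ideal.mul_mem_right _ _ ?_
  rw [pow_mul]
  exact Ideal.pow_mem_pow hx _

lemma add_pow_mem_aux {x y : A} {c m : ℕ} (hm : m ≠ 0) (hx : x ^ m ∈ I ^ c)
    (hy : y ^ m ∈ I ^ c) (j : ℕ) : (x + y) ^ (j * m) ∈ I ^ ((j - 1) * c) := by
  rw [add_pow]
  refine Ideal.sum_mem _ fun i hi => ?_
  rw [Finset.mem_range, Nat.lt_succ_iff] at hi
  refine Ideal.mul_mem_right _ _ ?_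
  have hxi := pow_mem_of_pow_mem_aux I hx i
  have hyi := pow_mem_of_pow_mem_aux I hy (j * m - i)
  have hprod : x ^ i * y ^ (j * m - i) ∈ I ^ (c * (i / m) + c * ((j * m - i) / m)) := by
    rw [pow_add]
    exact Ideal.mul_mem_mul hxi hyi
  have hle : (j - 1) * c ≤ c * (i / m) + c * ((j * m - i) / m) := by
    have := nat_div_floor_aux (Nat.pos_of_ne_zero hm) j i hi
    calc (j - 1) * c ≤ (i / m + (j * m - i) / m) * c := Nat.mul_le_mul_right _ this
      _ = c * (i / m) + c * ((j * m - i) / m) := by ring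
  exact Ideal.pow_le_pow_right hle hprod

end OrdAux

section ENNRealAux

lemma nsmul_le_of_superadd_aux {a : ℕ → ℝ≥0∞} (h : ∀ m n, a m + a n ≤ a (m + n)) (m : ℕ) :
    ∀ j : ℕ, (j : ℝ≥0∞) * a m ≤ a (j * m) := by
  intro j
  induction j with
  | zero => simp
  | succ j ih =>
      push_cast
      rw [add_mul, one_mul, add_mul, one_mul]
      exact (add_le_add_left ih _).trans (h _ _)

/-- Fekete-style: limsup of `a k / k` equals `⨆ m, a (m+1) / (m+1)` for superadditive `a`. -/
lemma limsup_div_eq_iSup_aux {a : ℕ → ℝ≥0∞} (h : ∀ m n, a m + a n ≤ a (m + n)) :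
    Filter.atTop.limsup (fun k : ℕ => a k / (k : ℝ≥0∞)) =
      ⨆ m : ℕ, a (m + 1) / ((m : ℝ≥0∞) + 1) := by
  apply le_antisymm
  · refine limsup_le_of_le (by isBoundedDefault) ?_
    filter_upwards [eventually_ge_atTop 1] with k hk
    obtain ⟨m, rfl⟩ := Nat.exists_eq_add_of_le hk
    rw [add_comm 1 m]
    exact le_iSup_of_le m (by push_cast; exact le_rfl)
  · refine iSup_le fun m => ?_
    refine le_limsup_of_frequently_le ?_ (by isBoundedDefault)
    rw [frequently_atTop]
    intro N
    refine ⟨max N 1 * (m + 1), le_trans (le_max_left N 1) ?_, ?_⟩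
    · exact Nat.le_mul_of_pos_right _ (Nat.succ_pos m)
    · set j := max N 1 with hj
      have hj1 : 1 ≤ j := le_max_right N 1
      have h1 : ((j : ℝ≥0∞)) * a (m + 1) ≤ a (j * (m + 1)) := nsmul_le_of_superadd_aux h _ j
      have h2 : ((j * (m + 1) : ℕ) : ℝ≥0∞) = (j : ℝ≥0∞) * ((m : ℝ≥0∞) + 1) := by
        push_cast; ring
      rw [h2]
      calc a (m + 1) / ((m : ℝ≥0∞) + 1)
          = (j : ℝ≥0∞) * a (m + 1) / ((j : ℝ≥0∞) * ((m : ℝ≥0∞) + 1)) := by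
            rw [ENNReal.mul_div_mul_left _ _ (by exact_mod_cast Nat.one_le_iff_ne_zero.mp hj1)
              (natCast_ne_top j)]
        _ ≤ a (j * (m + 1)) / ((j : ℝ≥0∞) * ((m : ℝ≥0∞) + 1)) :=
            ENNReal.div_le_div_right h1 _

lemma div_le_of_forall_ratio_aux {c m : ℕ} (hm : m ≠ 0) {V : ℝ≥0∞}
    (h : ∀ j : ℕ, 1 ≤ j → (((j - 1) * c : ℕ) : ℝ≥0∞) / ((j * m : ℕ) : ℝ≥0∞) ≤ V) :
    (c : ℝ≥0∞) / (m : ℝ≥0∞) ≤ V := by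
  rcases Nat.eq_zero_or_pos c with rfl | hc
  · simp
  refine le_of_forall_lt_imp_le_of_dense fun e he => ?_
  have hmne : (m : ℝ≥0∞) ≠ 0 := by exact_mod_cast hm
  have hem : e * m < c :=
    (ENNReal.lt_div_iff_mul_lt (Or.inl hmne) (Or.inl (natCast_ne_top m))).mp he
  set ε := (c : ℝ≥0∞) - e * m with hεdef
  have hε0 : ε ≠ 0 := by
    rw [hεdef, ← pos_iff_ne_zero]
    exact tsub_pos_of_lt hem
  have hεtop : ε ≠ ∞ := ((tsub_le_self).trans_lt (natCast_lt_top c)).ne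
  have hεc : e * m + ε = c := add_tsub_cancel_of_le hem.le
  obtain ⟨j, hj⟩ := ENNReal.exists_nat_gt
    ((ENNReal.div_lt_top (natCast_ne_top c) hε0).ne)
  have hj1 : 1 ≤ j := by
    rcases Nat.eq_zero_or_pos j with rfl | h1
    · exact absurd hj (by simp)
    · exact h1
  have hcj : (c : ℝ≥0∞) < j * ε :=
    (ENNReal.div_lt_iff (Or.inl hε0) (Or.inl hεtop)).mp hj
  refine le_trans ?_ (h j hj1)
  have hjm0 : ((j * m : ℕ) : ℝ≥0∞) ≠ 0 := by
    exact_mod_cast Nat.mul_ne_zero (by omega) hm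
  rw [ENNReal.le_div_iff_mul_le (Or.inl hjm0) (Or.inl (natCast_ne_top _))]
  have key : e * ((j * m : ℕ) : ℝ≥0∞) + c ≤ (j : ℝ≥0∞) * c := by
    calc e * ((j * m : ℕ) : ℝ≥0∞) + c = (j : ℝ≥0∞) * (e * m) + c := by push_cast; ring
      _ ≤ (j : ℝ≥0∞) * (e * m) + (j : ℝ≥0∞) * ε := by gcongr
      _ = (j : ℝ≥0∞) * (e * m + ε) := by rw [mul_add]
      _ = (j : ℝ≥0∞) * c := by rw [hεc]
  have h2 : e * ((j * m : ℕ) : ℝ≥0∞) ≤ (j : ℝ≥0∞) * c - c :=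
    ENNReal.le_sub_of_add_le_right (natCast_ne_top c) key
  refine h2.trans (le_of_eq ?_)
  rw [Nat.cast_mul, ENNReal.natCast_sub, Nat.cast_one,
    ENNReal.sub_mul (fun _ _ => natCast_ne_top c), one_mul]

end ENNRealAux

section NubarAux

variable {A : Type*} [CommRing A] (I : Ideal A)

lemma spanpow_superadd_aux (x : A) (k l : ℕ) :
    idealOrd I (Ideal.span {x} ^ k) + idealOrd I (Ideal.span {x} ^ l) ≤
      idealOrd I (Ideal.span {x} ^ (k + l)) := by
  rw [pow_add]
  exact idealOrd_mul_aux I _ _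

lemma elemNubar_eq_iSup_aux (x : A) :
    elemNubar I x =
      ⨆ m : ℕ, idealOrd I (Ideal.span {x} ^ (m + 1)) / ((m : ℝ≥0∞) + 1) :=
  limsup_div_eq_iSup_aux (spanpow_superadd_aux I x)

lemma ord_div_le_elemNubar_aux (x : A) {k : ℕ} (hk : k ≠ 0) :
    idealOrd I (Ideal.span {x} ^ k) / (k : ℝ≥0∞) ≤ elemNubar I x := by
  rw [elemNubar_eq_iSup_aux]
  refine le_iSup_of_le (k - 1) ?_
  have h1 : k - 1 + 1 = k := Nat.succ_pred_eq_of_pos (Nat.pos_of_ne_zero hk)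
  have h2 : ((k - 1 : ℕ) : ℝ≥0∞) + 1 = (k : ℝ≥0∞) := by exact_mod_cast h1
  rw [h1, h2]

lemma elemNubar_ge_pow_div_aux (x : A) {k c : ℕ} (hk : k ≠ 0) (h : x ^ k ∈ I ^ c) :
    (c : ℝ≥0∞) / (k : ℝ≥0∞) ≤ elemNubar I x := by
  refine le_trans ?_ (ord_div_le_elemNubar_aux I x hk)
  refine ENNReal.div_le_div_right (le_idealOrd_aux I ?_) _
  rw [Ideal.span_singleton_pow]
  exact (Ideal.span_singleton_le_iff_mem _).mpr h

lemma lt_ord_mul_of_lt_aux (x : A) {d : ℝ≥0∞} {k : ℕ} (hk : k ≠ 0)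
    (h : d < idealOrd I (Ideal.span {x} ^ k) / (k : ℝ≥0∞)) (l : ℕ) (hl : l ≠ 0) :
    d < idealOrd I (Ideal.span {x} ^ (l * k)) / ((l * k : ℕ) : ℝ≥0∞) := by
  have h1 : (l : ℝ≥0∞) * idealOrd I (Ideal.span {x} ^ k) ≤
      idealOrd I (Ideal.span {x} ^ (l * k)) :=
    nsmul_le_of_superadd_aux (spanpow_superadd_aux I x) k l
  refine h.trans_le ?_
  rw [Nat.cast_mul]
  calc idealOrd I (Ideal.span {x} ^ k) / (k : ℝ≥0∞)
      = (l : ℝ≥0∞) * idealOrd I (Ideal.span {x} ^ k) / ((l : ℝ≥0∞) * (k : ℝ≥0∞)) := by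
        rw [ENNReal.mul_div_mul_left _ _ (by exact_mod_cast hl) (natCast_ne_top l)]
    _ ≤ idealOrd I (Ideal.span {x} ^ (l * k)) / ((l : ℝ≥0∞) * (k : ℝ≥0∞)) :=
        ENNReal.div_le_div_right h1 _

end NubarAux

/-- `ν̄_I` is an order function: `ν̄_I(x+y) ≥ min(ν̄_I(x), ν̄_I(y))`,
`ν̄_I(xy) ≥ ν̄_I(x) + ν̄_I(y)`, `ν̄_I(0) = ∞` and `ν̄_I(1) = 0`. -/
theorem elemNubar_isOrderFunction {A : Type*} [CommRing A] (I : Ideal A) (hI : I ≠ ⊤) :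
    (∀ x y : A, min (elemNubar I x) (elemNubar I y) ≤ elemNubar I (x + y)) ∧
    (∀ x y : A, elemNubar I x + elemNubar I y ≤ elemNubar I (x * y)) ∧
    elemNubar I (0 : A) = ⊤ ∧ elemNubar I (1 : A) = 0 := by
  refine ⟨?_, ?_, ?_, ?_⟩
  · -- min part
    intro x y
    refine le_of_forall_lt fun d hd => ?_
    have hdx : d < elemNubar I x := hd.trans_le (min_le_left _ _)
    have hdy : d < elemNubar I y := hd.trans_le (min_le_right _ _)
    rw [elemNubar_eq_iSup_aux] at hdx hdy
    obtain ⟨m1', h1⟩ := lt_iSup_iff.mp hdx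
    obtain ⟨m2', h2⟩ := lt_iSup_iff.mp hdy
    rw [← Nat.cast_succ] at h1 h2
    set m1 := m1' + 1 with hm1def
    set m2 := m2' + 1 with hm2def
    have h1' := lt_ord_mul_of_lt_aux I x (Nat.succ_ne_zero m1') h1 m2 (Nat.succ_ne_zero m2')
    have h2' := lt_ord_mul_of_lt_aux I y (Nat.succ_ne_zero m2') h2 m1 (Nat.succ_ne_zero m1')
    rw [Nat.mul_comm m1 m2] at h2'
    set m := m2 * m1 with hmdef
    have hm0 : m ≠ 0 := Nat.mul_ne_zero (Nat.succ_ne_zero m2') (Nat.succ_ne_zero m1')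
    have hm0' : (m : ℝ≥0∞) ≠ 0 := by exact_mod_cast hm0
    have hdmx : d * (m : ℝ≥0∞) < idealOrd I (Ideal.span {x} ^ m) :=
      (ENNReal.lt_div_iff_mul_lt (Or.inl hm0') (Or.inl (natCast_ne_top m))).mp h1'
    have hdmy : d * (m : ℝ≥0∞) < idealOrd I (Ideal.span {y} ^ m) :=
      (ENNReal.lt_div_iff_mul_lt (Or.inl hm0') (Or.inl (natCast_ne_top m))).mp h2'
    obtain ⟨p, hpmem, hdp⟩ := exists_of_lt_idealOrd_aux I hdmx
    obtain ⟨q, hqmem, hdq⟩ := exists_of_lt_idealOrd_aux I hdmy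
    rw [Ideal.span_singleton_pow, Ideal.span_singleton_le_iff_mem] at hpmem hqmem
    set c := min p q with hcdef
    have hxc : x ^ m ∈ I ^ c := Ideal.pow_le_pow_right (min_le_left p q) hpmem
    have hyc : y ^ m ∈ I ^ c := Ideal.pow_le_pow_right (min_le_right p q) hqmem
    have hdc : d * (m : ℝ≥0∞) < (c : ℝ≥0∞) := by
      rcases le_total p q with hpq | hpq
      · rwa [hcdef, min_eq_left hpq]
      · rwa [hcdef, min_eq_right hpq]
    have hall : ∀ j : ℕ, 1 ≤ j →
        (((j - 1) * c : ℕ) : ℝ≥0∞) / ((j * m : ℕ) : ℝ≥0∞) ≤ elemNubar I (x + y) := by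
      intro j hj
      exact elemNubar_ge_pow_div_aux I (x + y) (Nat.mul_ne_zero (by omega) hm0)
        (add_pow_mem_aux I hm0 hxc hyc j)
    have hfin : (c : ℝ≥0∞) / (m : ℝ≥0∞) ≤ elemNubar I (x + y) :=
      div_le_of_forall_ratio_aux hm0 hall
    have hlt : d < (c : ℝ≥0∞) / (m : ℝ≥0∞) :=
      (ENNReal.lt_div_iff_mul_lt (Or.inl hm0') (Or.inl (natCast_ne_top m))).mpr hdc
    exact hlt.trans_le hfin
  · -- mul part
    intro x y
    rw [elemNubar_eq_iSup_aux I x, elemNubar_eq_iSup_aux I y, ENNReal.iSup_add]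
    refine iSup_le fun m => ?_
    rw [ENNReal.add_iSup]
    refine iSup_le fun n => ?_
    rw [show ((m : ℝ≥0∞) + 1) = ((m + 1 : ℕ) : ℝ≥0∞) by push_cast; ring,
      show ((n : ℝ≥0∞) + 1) = ((n + 1 : ℕ) : ℝ≥0∞) by push_cast; ring]
    set M := m + 1 with hMdef
    set N := n + 1 with hNdef
    have hM0 : (M : ℝ≥0∞) ≠ 0 := by positivity
    have hN0 : (N : ℝ≥0∞) ≠ 0 := by positivity
    have hxM : (N : ℝ≥0∞) * idealOrd I (Ideal.span {x} ^ M) ≤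
        idealOrd I (Ideal.span {x} ^ (M * N)) := by
      rw [Nat.mul_comm M N]
      exact nsmul_le_of_superadd_aux (spanpow_superadd_aux I x) M N
    have hyN : (M : ℝ≥0∞) * idealOrd I (Ideal.span {y} ^ N) ≤
        idealOrd I (Ideal.span {y} ^ (M * N)) :=
      nsmul_le_of_superadd_aux (spanpow_superadd_aux I y) N M
    have hmul : idealOrd I (Ideal.span {x} ^ (M * N)) + idealOrd I (Ideal.span {y} ^ (M * N)) ≤
        idealOrd I (Ideal.span {x * y} ^ (M * N)) := by
      rw [show Ideal.span {x * y} ^ (M * N) =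
          Ideal.span {x} ^ (M * N) * Ideal.span {y} ^ (M * N) by
        rw [← mul_pow, Ideal.span_singleton_mul_span_singleton]]
      exact idealOrd_mul_aux I _ _
    have e1 : idealOrd I (Ideal.span {x} ^ M) / ((M : ℕ) : ℝ≥0∞) =
        (N : ℝ≥0∞) * idealOrd I (Ideal.span {x} ^ M) / ((N : ℝ≥0∞) * (M : ℝ≥0∞)) :=
      (ENNReal.mul_div_mul_left _ _ hN0 (natCast_ne_top N)).symm
    have e2 : idealOrd I (Ideal.span {y} ^ N) / ((N : ℕ) : ℝ≥0∞) =
        (M : ℝ≥0∞) * idealOrd I (Ideal.span {y} ^ N) / ((M : ℝ≥0∞) * (N : ℝ≥0∞)) :=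
      (ENNReal.mul_div_mul_left _ _ hM0 (natCast_ne_top M)).symm
    rw [e1, e2, mul_comm ((N : ℕ) : ℝ≥0∞) ((M : ℕ) : ℝ≥0∞), ← ENNReal.add_div]
    calc ((N : ℝ≥0∞) * idealOrd I (Ideal.span {x} ^ M) +
          (M : ℝ≥0∞) * idealOrd I (Ideal.span {y} ^ N)) / ((M : ℝ≥0∞) * (N : ℝ≥0∞))
        ≤ idealOrd I (Ideal.span {x * y} ^ (M * N)) / ((M : ℝ≥0∞) * (N : ℝ≥0∞)) := by
          refine ENNReal.div_le_div_right (le_trans (add_le_add hxM hyN) hmul) _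
      _ = idealOrd I (Ideal.span {x * y} ^ (M * N)) / ((M * N : ℕ) : ℝ≥0∞) := by
          rw [Nat.cast_mul]
      _ ≤ elemNubar I (x * y) :=
          ord_div_le_elemNubar_aux I (x * y) (Nat.mul_ne_zero (by omega) (by omega))
  · -- zero part
    have hbot : idealOrd I (⊥ : Ideal A) = ⊤ := by
      refine le_antisymm le_top ?_
      rw [← ENNReal.iSup_natCast]
      exact iSup_le fun n => le_idealOrd_aux I bot_le
    have hev : ∀ᶠ k : ℕ in atTop,
        idealOrd I (Ideal.span {(0 : A)} ^ k) / (k : ℝ≥0∞) = ⊤ := by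
      filter_upwards [eventually_ge_atTop 1] with k hk
      have h1 : Ideal.span {(0 : A)} ^ k = ⊥ := by
        rw [Ideal.span_singleton_pow, zero_pow (by omega)]
        exact Ideal.span_singleton_eq_bot.mpr rfl
      rw [h1, hbot, ENNReal.top_div, if_neg (natCast_ne_top k)]
    show Filter.atTop.limsup (fun k : ℕ => idealOrd I (Ideal.span {(0 : A)} ^ k) / (k : ℝ≥0∞)) = ⊤
    rw [limsup_congr hev]
    exact limsup_const ⊤
  · -- one part
    have hord : ∀ k : ℕ, idealOrd I (Ideal.span {(1 : A)} ^ k) = 0 := by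
      intro k
      rw [Ideal.span_singleton_one, ← Ideal.one_eq_top, one_pow]
      refine le_antisymm ?_ zero_le
      refine iSup₂_le fun n hn => ?_
      rcases Nat.eq_zero_or_pos n with rfl | hnpos
      · simp
      · exfalso
        apply hI
        rw [Ideal.one_eq_top] at hn
        exact top_le_iff.mp (hn.trans (Ideal.pow_le_self hnpos.ne'))
    show Filter.atTop.limsup (fun k : ℕ => idealOrd I (Ideal.span {(1 : A)} ^ k) / (k : ℝ≥0∞)) = 0
    have : (fun k : ℕ => idealOrd I (Ideal.span {(1 : A)} ^ k) / (k : ℝ≥0∞)) =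
        fun _ : ℕ => (0 : ℝ≥0∞) := by
      funext k
      rw [hord k, ENNReal.zero_div]
    rw [this]
    exact limsup_const 0
end

section
/- Let A be a commutative ring, I a proper ideal, and f ∈ A integral over I. Then ν̄_I(f) ≥ 1. -/
open Filter ENNReal Topology

/-- `f` is integral over the ideal `I`: there is an equation
`f^k + a₁ f^(k-1) + ⋯ + a_k = 0` with `aᵢ ∈ Iⁱ` (and `k ≥ 1`). -/
def IsIntegralOverIdeal {A : Type*} [CommRing A] (I : Ideal A) (f : A) : Prop :=
  ∃ (k : ℕ) (a : ℕ → A), 0 < k ∧ (∀ i ∈ Finset.Icc 1 k, a i ∈ I ^ i) ∧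
    f ^ k + ∑ i ∈ Finset.Icc 1 k, a i * f ^ (k - i) = 0

lemma pow_mem_aux {A : Type*} [CommRing A] {I : Ideal A} {f : A} {k : ℕ} {a : ℕ → A}
    (hk : 0 < k) (ha : ∀ i ∈ Finset.Icc 1 k, a i ∈ I ^ i)
    (heq : f ^ k + ∑ i ∈ Finset.Icc 1 k, a i * f ^ (k - i) = 0) :
    ∀ n, f ^ n ∈ I ^ (n - (k - 1)) := by
  intro n
  induction n using Nat.strong_induction_on with
  | _ n ih =>
    by_cases hn : n < k
    · have : n - (k - 1) = 0 := by omega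
      simp [this]
    · push_neg at hn
      have hfk : f ^ k = -∑ i ∈ Finset.Icc 1 k, a i * f ^ (k - i) := by linear_combination heq
      have : f ^ n = -∑ i ∈ Finset.Icc 1 k, a i * f ^ (n - i) := by
        have : f ^ n = f ^ (n - k) * f ^ k := by
          rw [← pow_add]; congr 1; omega
        rw [this, hfk, mul_neg, Finset.mul_sum]
        congr 1
        refine Finset.sum_congr rfl fun i hi => ?_
        simp only [Finset.mem_Icc] at hi
        have hki : (n - k) + (k - i) = n - i := by omega
        rw [← hki, pow_add]; ring
      rw [this]
      refine neg_mem (Ideal.sum_mem _ fun i hi => ?_)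
      simp only [Finset.mem_Icc] at hi
      have h1 : a i ∈ I ^ i := ha i (Finset.mem_Icc.2 hi)
      have h2 : f ^ (n - i) ∈ I ^ ((n - i) - (k - 1)) := ih (n - i) (by omega)
      have h3 : a i * f ^ (n - i) ∈ I ^ (i + ((n - i) - (k - 1))) := by
        rw [pow_add]; exact Ideal.mul_mem_mul h1 h2
      exact Ideal.pow_le_pow_right (by omega) h3

/-- If `f` is integral over the proper ideal `I`, then `ν̄_I(f) ≥ 1`. -/
theorem one_le_nubar_of_isIntegralOverIdeal {A : Type*} [CommRing A]
    (I : Ideal A) (hI : I ≠ ⊤) (f : A) (hf : IsIntegralOverIdeal I f) :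
    1 ≤ idealNubar I (Ideal.span {f}) := by
  obtain ⟨k, a, hk, ha, heq⟩ := hf
  have key : ∀ n : ℕ, f ^ n ∈ I ^ (n - (k - 1)) := pow_mem_aux hk ha heq
  -- lower bound the sequence
  have hlow : ∀ n : ℕ, ((n - (k - 1) : ℕ) : ℝ≥0∞) ≤ idealOrd I (Ideal.span {f} ^ n) := by
    intro n
    have hle : Ideal.span {f} ^ n ≤ I ^ (n - (k - 1)) := by
      rw [Ideal.span_singleton_pow, Ideal.span_singleton_le_iff_mem]
      exact key n
    exact le_biSup (fun m : ℕ => (m : ℝ≥0∞)) (show n - (k-1) ∈ {m : ℕ | _ ≤ I ^ m} from hle)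
  have hg : Tendsto (fun n : ℕ => ((n - (k - 1) : ℕ) : ℝ≥0∞) / (n : ℝ≥0∞)) atTop (𝓝 1) := by
    have h0 : Tendsto (fun n : ℕ => 1 - ((k - 1 : ℕ) : ℝ≥0∞) / (n : ℝ≥0∞)) atTop (𝓝 1) := by
      have hz : Tendsto (fun n : ℕ => ((k - 1 : ℕ) : ℝ≥0∞) / (n : ℝ≥0∞)) atTop (𝓝 0) := by
        simp only [div_eq_mul_inv]
        have := ENNReal.Tendsto.const_mul (a := ((k - 1 : ℕ) : ℝ≥0∞))
          ENNReal.tendsto_inv_nat_nhds_zero (Or.inr (ENNReal.natCast_ne_top _))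
        simpa using this
      have hc : Continuous (fun x : ℝ≥0∞ => 1 - x) := ENNReal.continuous_sub_left one_ne_top
      have := (hc.tendsto 0).comp hz
      simpa [Function.comp_def] using this
    refine h0.congr' ?_
    filter_upwards [eventually_ge_atTop (k)] with n hn
    have hn0 : (n : ℝ≥0∞) ≠ 0 := by
      simp only [ne_eq, Nat.cast_eq_zero]; omega
    have hcast : ((n - (k - 1) : ℕ) : ℝ≥0∞) = (n : ℝ≥0∞) - ((k - 1 : ℕ) : ℝ≥0∞) := by
      exact ENNReal.natCast_sub n (k - 1)
    rw [hcast, ENNReal.sub_div (fun _ _ => hn0), ENNReal.div_self hn0 (ENNReal.natCast_ne_top _)]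
  calc (1 : ℝ≥0∞) = atTop.limsup (fun n : ℕ => ((n - (k - 1) : ℕ) : ℝ≥0∞) / (n : ℝ≥0∞)) :=
        hg.limsup_eq.symm
    _ ≤ idealNubar I (Ideal.span {f}) := by
        refine Filter.limsup_le_limsup (Eventually.of_forall fun n => ?_)
        exact ENNReal.div_le_div_right (hlow n) _
end

section
/- Let A be a Noetherian ring containing ℚ (characteristic 0) and I an ideal containing at least one non-zerodivisor. Then I admits a finite generating set consisting entirely of non-zerodivisors. -/
open Ideal

/-- Davis' prime avoidance. -/
lemma davis_avoidance {A : Type*} [CommRing A] (s : Finset (Ideal A)) :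
    ∀ (_ : ∀ p ∈ s, p.IsPrime) (J : Ideal A) (x : A)
      (_ : ∀ p ∈ s, ¬(Ideal.span {x} ⊔ J ≤ p)),
    ∃ y ∈ J, ∀ p ∈ s, x + y ∉ p := by
  classical
  induction s using Finset.strongInductionOn with
  | _ s IH =>
  intro hprime J x hns
  by_cases hred : ∃ p ∈ s, ∃ q ∈ s, p ≠ q ∧ p ≤ q
  · obtain ⟨p, hp, q, hq, hne, hle⟩ := hred
    obtain ⟨y, hyJ, hy⟩ := IH (s.erase p) (Finset.erase_ssubset hp)
      (fun p' hp' => hprime p' (Finset.mem_of_mem_erase hp')) J x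
      (fun p' hp' => hns p' (Finset.mem_of_mem_erase hp'))
    refine ⟨y, hyJ, fun p' hp' hmem => ?_⟩
    by_cases hpp : p' = p
    · exact hy q (Finset.mem_erase.mpr ⟨hne.symm, hq⟩) (hle (hpp ▸ hmem))
    · exact hy p' (Finset.mem_erase.mpr ⟨hpp, hp'⟩) hmem
  · push_neg at hred
    rcases s.eq_empty_or_nonempty with rfl | ⟨p0, hp0⟩
    · exact ⟨0, J.zero_mem, by simp⟩
    obtain ⟨y, hyJ, hy⟩ := IH (s.erase p0) (Finset.erase_ssubset hp0)
      (fun p' hp' => hprime p' (Finset.mem_of_mem_erase hp')) J x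
      (fun p' hp' => hns p' (Finset.mem_of_mem_erase hp'))
    by_cases hxy : x + y ∈ p0
    · -- fix up
      have hJ : ¬ J ≤ p0 := by
        intro hJle
        refine hns p0 hp0 (sup_le ?_ hJle)
        rw [Ideal.span_le, Set.singleton_subset_iff]
        have : x = (x + y) - y := by ring
        exact this ▸ sub_mem hxy (hJle hyJ)
      obtain ⟨j, hjJ, hjp⟩ := SetLike.not_le_iff_exists.mp hJ
      have hq : ∀ q ∈ s.erase p0, ∃ z, z ∈ q ∧ z ∉ p0 := by
        intro q hq
        have hqs := Finset.mem_of_mem_erase hq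
        have hne := (Finset.mem_erase.mp hq).1
        obtain ⟨z, hz1, hz2⟩ := SetLike.not_le_iff_exists.mp (hred q hqs p0 hp0 hne)
        exact ⟨z, hz1, hz2⟩
      choose f hf1 hf2 using hq
      set z : A := j * ∏ q ∈ (s.erase p0).attach, f q q.2 with hz
      have hzJ : z ∈ J := J.mul_mem_right _ hjJ
      have hzq : ∀ q ∈ s.erase p0, z ∈ q := by
        intro q hqe
        have : (∏ q ∈ (s.erase p0).attach, f q q.2) ∈ q := by
          rw [← Finset.mul_prod_erase (s.erase p0).attach _
            (Finset.mem_attach _ ⟨q, hqe⟩)]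
          exact q.mul_mem_right _ (hf1 q hqe)
        exact q.mul_mem_left _ this
      have hzp0 : z ∉ p0 := by
        intro hmem
        have hp0p := hprime p0 hp0
        rcases (hp0p.mul_mem_iff_mem_or_mem).mp hmem with h | h
        · exact hjp h
        · rcases (Ideal.IsPrime.prod_mem_iff (hp := hp0p)).mp h with ⟨q, _, hq⟩
          exact hf2 q q.2 hq
      refine ⟨y + z, J.add_mem hyJ hzJ, fun p hp => ?_⟩
      by_cases hpp : p = p0
      · subst hpp
        intro hmem
        have : z ∈ p := by
          have : z = (x + (y + z)) - (x + y) := by ring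
          exact this ▸ sub_mem hmem hxy
        exact hzp0 this
      · intro hmem
        have hpe : p ∈ s.erase p0 := Finset.mem_erase.mpr ⟨hpp, hp⟩
        have : x + y ∈ p := by
          have : x + y = (x + (y + z)) - z := by ring
          exact this ▸ sub_mem hmem (hzq p hpe)
        exact hy p hpe this
    · exact ⟨y, hyJ, fun p hp => by
        by_cases hpp : p = p0
        · exact hpp ▸ hxy
        · exact hy p (Finset.mem_erase.mpr ⟨hpp, hp⟩)⟩


lemma zd_primes {A : Type*} [CommRing A] [IsNoetherianRing A] [Nontrivial A] :
    ∃ s : Finset (Ideal A), (∀ p ∈ s, p.IsPrime) ∧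
      (∀ x : A, x ∉ nonZeroDivisors A → ∃ p ∈ s, x ∈ p) ∧
      (∀ p ∈ s, ∀ x ∈ p, x ∉ nonZeroDivisors A) := by
  classical
  obtain ⟨t, ⟨ht, htp, -, htmin⟩⟩ : ∃ t : Finset (Ideal A),
      Submodule.IsMinimalPrimaryDecomposition (⊥ : Ideal A) t := Ideal.IsLasker.minimal (Submodule.isLasker A A) ⊥
  refine ⟨t.image Ideal.radical, ?_, ?_, ?_⟩
  · intro p hp
    obtain ⟨Q, hQ, rfl⟩ := Finset.mem_image.mp hp
    exact Ideal.isPrime_radical (htp hQ)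
  · intro x hx
    rw [mem_nonZeroDivisors_iff_right] at hx
    push_neg at hx
    obtain ⟨y, hxy, hy⟩ := hx
    -- y ≠ 0, x * y = 0 ; find Q ∈ t with y ∉ Q
    have : ∃ Q ∈ t, y ∉ Q := by
      by_contra hc
      push_neg at hc
      have : y ∈ t.inf id := by
        rw [Submodule.mem_finsetInf]
        exact fun Q hQ => hc Q hQ
      rw [ht] at this
      exact hy this
    obtain ⟨Q, hQ, hyQ⟩ := this
    have hxyQ : y * x ∈ Q := by
      rw [hxy]; exact Q.zero_mem
    rcases ((Ideal.isPrimary_iff).mp (htp hQ)).2 hxyQ with h | h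
    · exact absurd h hyQ
    · exact ⟨Q.radical, Finset.mem_image_of_mem _ hQ, h⟩
  · intro p hp x hxp
    obtain ⟨Q, hQ, rfl⟩ := Finset.mem_image.mp hp
    obtain ⟨n, hn⟩ := hxp
    obtain ⟨y, hy1, hy2⟩ := SetLike.not_le_iff_exists.mp (htmin hQ)
    intro hreg
    have hy0 : y ≠ 0 := fun h => hy2 (h ▸ Q.zero_mem)
    have : x ^ n * y = 0 := by
      have : x ^ n * y ∈ t.inf id := by
        rw [Submodule.mem_finsetInf]
        intro J hJ
        by_cases hJQ : J = Q
        · subst hJQ; exact J.mul_mem_right y hn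
        · have : y ∈ J :=
            Submodule.mem_finsetInf.mp hy1 J (Finset.mem_erase.mpr ⟨hJQ, hJ⟩)
          exact J.mul_mem_left _ this
      rw [ht] at this
      exact this
    exact hy0 (mem_nonZeroDivisors_iff_right.mp (pow_mem hreg n) _ (by rwa [mul_comm] at this))

/-- A Noetherian ring of characteristic zero: every ideal containing a
non-zerodivisor admits a finite generating set consisting of non-zerodivisors. -/
theorem exists_nonZeroDivisor_generating_set {A : Type*} [CommRing A]
    [IsNoetherianRing A] [CharZero A] (I : Ideal A)
    (h : ∃ r ∈ I, r ∈ nonZeroDivisors A) :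
    ∃ s : Finset A, (∀ x ∈ s, x ∈ nonZeroDivisors A) ∧ I = Ideal.span (s : Set A) := by
  classical
  obtain ⟨r, hrI, hr⟩ := h
  obtain ⟨s, hsp, hcover, hsub⟩ := zd_primes (A := A)
  obtain ⟨T, hT⟩ := (IsNoetherian.noetherian I : I.FG)
  have H : ∀ g : {x // x ∈ T}, ∃ y ∈ Ideal.span {r}, ∀ p ∈ s, g.1 + y ∉ p := by
    intro g
    refine davis_avoidance s hsp (Ideal.span {r}) g.1 ?_
    intro p hp hle
    exact hsub p hp r (hle (le_sup_right (α := Ideal A)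
      (Ideal.mem_span_singleton_self r))) hr
  choose y hy1 hy2 using H
  refine ⟨insert r (T.attach.image fun g => g.1 + y g), ?_, ?_⟩
  · intro x hx
    rcases Finset.mem_insert.mp hx with rfl | hx
    · exact hr
    · obtain ⟨g, -, rfl⟩ := Finset.mem_image.mp hx
      by_contra hnx
      obtain ⟨p, hp, hmem⟩ := hcover _ hnx
      exact hy2 g p hp hmem
  · have hspanr : Ideal.span {r} ≤ I := by
      rw [Ideal.span_le, Set.singleton_subset_iff]; exact hrI
    apply le_antisymm
    · rw [← hT]
      rw [Submodule.span_le]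
      intro g hg
      have hgT : g ∈ T := hg
      have h1 : g + y ⟨g, hgT⟩ ∈ Ideal.span
          ((insert r (T.attach.image fun g => g.1 + y g) : Finset A) : Set A) := by
        apply Ideal.subset_span
        simp only [Finset.coe_insert, Set.mem_insert_iff, Finset.coe_image]
        right
        exact ⟨⟨g, hgT⟩, by simp⟩
      have h2 : y ⟨g, hgT⟩ ∈ Ideal.span
          ((insert r (T.attach.image fun g => g.1 + y g) : Finset A) : Set A) := by
        refine Ideal.span_mono ?_ (hy1 ⟨g, hgT⟩)
        simp
      have : g = (g + y ⟨g, hgT⟩) - y ⟨g, hgT⟩ := by ring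
      rw [SetLike.mem_coe, this]
      exact sub_mem h1 h2
    · rw [Ideal.span_le]
      intro x hx
      simp only [Finset.coe_insert, Set.mem_insert_iff, Finset.coe_image,
        Set.mem_image, Finset.mem_coe] at hx
      rcases hx with rfl | ⟨g, -, rfl⟩
      · exact hrI
      · have hgI : g.1 ∈ I := by
          rw [← hT]; exact Ideal.subset_span g.2
        exact I.add_mem hgI (hspanr (hy1 g))
end
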